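/- POD optimality: for every d with 1 ≤ d ≤ l and every orthonormal family φ₁,…,φ_d in H, one has (1/ℓ) Σ_{i=1}^ℓ ‖U_i − Σ_{j=1}^d ⟨U_i,φ_j⟩ φ_j‖² ≥ Σ_{j=d+1}^{l} λ_j; in other words, the POD basis ψ₁,…,ψ_d of rank d attains the minimum of the mean-square truncation error over all orthonormal families of size d. -/

import Mathlib

open RealInnerProductSpace

/-- **POD optimality.** Let `U 1, …, U ℓ` be snapshots in a real inner product
space `H`, not all zero, with correlation matrix `K i j = (1/ℓ) ⟪U i, U j⟫`,
positive eigenvalues `lam 1 ≥ ⋯ ≥ lam l > 0` (`l = rank K`, so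
`K = ∑ i, lam i • (v i ⊗ v i)` with orthonormal eigenvectors `v i`), and POD
basis `ψ i = (1/√(ℓ * lam i)) • ∑ j, (v i) j • U j`. Then for every `d` with
`1 ≤ d ≤ l` and every orthonormal family `φ 1, …, φ d` in `H`,
`(1/ℓ) ∑ i ‖U i − ∑_{j ≤ d} ⟪U i, φ j⟫ • φ j‖² ≥ ∑_{j = d+1}^{l} lam j`;
i.e. the POD basis of rank `d` attains the minimal mean-square truncation
error over all orthonormal families of size `d`. -/
theorem pod_optimality
    {H : Type*} [NormedAddCommGroup H] [InnerProductSpace ℝ H]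
    (ℓ l : ℕ) (hℓ : 0 < ℓ)
    (U : Fin ℓ → H) (hU : ∃ i, U i ≠ 0)
    (K : Fin ℓ → Fin ℓ → ℝ)
    (hK : ∀ i j, K i j = (1 / (ℓ : ℝ)) * ⟪U i, U j⟫)
    (lam : Fin l → ℝ)
    (hpos : ∀ i, 0 < lam i)
    (hmono : ∀ i j : Fin l, i ≤ j → lam j ≤ lam i)
    (v : Fin l → Fin ℓ → ℝ)
    (hvorth : ∀ i i' : Fin l,
      (∑ j, v i j * v i' j) = if i = i' then (1 : ℝ) else 0)
    (hspec : ∀ j j' : Fin ℓ, K j j' = ∑ i, lam i * v i j * v i j')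
    (ψ : Fin l → H)
    (hψ : ∀ i, ψ i = (Real.sqrt ((ℓ : ℝ) * lam i))⁻¹ • ∑ j, v i j • U j)
    (d : ℕ) (hd1 : 1 ≤ d) (hdl : d ≤ l)
    (φ : Fin d → H) (hφ : Orthonormal ℝ φ) :
    (∑ j ∈ Finset.univ.filter (fun j : Fin l => d ≤ (j : ℕ)), lam j)
      ≤ (1 / (ℓ : ℝ)) * ∑ i, ‖U i - ∑ j, ⟪U i, φ j⟫ • φ j‖ ^ 2 := by
  have hℓ0 : (0:ℝ) < (ℓ:ℝ) := by exact_mod_cast hℓ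
  set s : Fin l → ℝ := fun k => Real.sqrt ((ℓ:ℝ) * lam k) with hsdef
  have hs0 : ∀ k, 0 < s k := fun k => Real.sqrt_pos.mpr (mul_pos hℓ0 (hpos k))
  have hssq : ∀ k, s k * s k = (ℓ:ℝ) * lam k :=
    fun k => Real.mul_self_sqrt (le_of_lt (mul_pos hℓ0 (hpos k)))
  -- inner products of snapshots
  have hUU : ∀ i j, ⟪U i, U j⟫ = (ℓ:ℝ) * ∑ k, lam k * v k i * v k j := by
    intro i j
    have h := hK i j
    rw [hspec] at h
    field_simp at h
    linarith [h]
  -- ⟪ψ k, U j⟫ = s k * v k j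
  have hψU : ∀ k j, ⟪ψ k, U j⟫ = s k * v k j := by
    intro k j
    rw [hψ k, real_inner_smul_left, sum_inner]
    have h1 : ∀ j' : Fin ℓ, ⟪v k j' • U j', U j⟫
        = (ℓ:ℝ) * ∑ m, (lam m * v m j) * (v k j' * v m j') := by
      intro j'
      rw [real_inner_smul_left, hUU]
      simp only [Finset.mul_sum]
      exact Finset.sum_congr rfl fun m _ => by ring
    rw [Finset.sum_congr rfl fun j' _ => h1 j', ← Finset.mul_sum, Finset.sum_comm]
    have h2 : ∀ m : Fin l, ∑ j', (lam m * v m j) * (v k j' * v m j')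
        = (lam m * v m j) * (if k = m then (1:ℝ) else 0) := by
      intro m; rw [← Finset.mul_sum, hvorth]
    rw [Finset.sum_congr rfl fun m _ => h2 m]
    simp only [mul_ite, mul_one, mul_zero, Finset.sum_ite_eq, Finset.mem_univ, if_true]
    rw [inv_mul_eq_iff_eq_mul₀ (hs0 k).ne']
    rw [show s k * (s k * v k j) = (s k * s k) * v k j by ring, hssq k]
    ring
  -- ψ is orthonormal
  have hψψ : ∀ k k', ⟪ψ k, ψ k'⟫ = if k = k' then (1:ℝ) else 0 := by
    intro k k'
    rw [hψ k', real_inner_smul_right, inner_sum]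
    have h1 : ∀ j, ⟪ψ k, v k' j • U j⟫ = v k' j * (s k * v k j) := by
      intro j; rw [real_inner_smul_right, hψU]
    rw [Finset.sum_congr rfl fun j _ => h1 j]
    have h2 : ∑ j, v k' j * (s k * v k j) = s k * ∑ j, v k j * v k' j := by
      simp only [Finset.mul_sum]
      exact Finset.sum_congr rfl fun j _ => by ring
    rw [h2, hvorth]
    rcases eq_or_ne k k' with h | h
    · subst h
      simp only [if_true, mul_one]
      exact inv_mul_cancel₀ (hs0 k).ne'
    · simp [h]
  have hψorth : Orthonormal ℝ ψ := by
    rw [orthonormal_iff_ite]; intro k k'; rw [hψψ]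
  -- decomposition of snapshots
  have hUdec : ∀ j, U j = ∑ k, (s k * v k j) • ψ k := by
    intro j
    have hn : ‖U j - ∑ k, (s k * v k j) • ψ k‖ ^ 2 = 0 := by
      rw [norm_sub_sq_real]
      have hA : ‖U j‖ ^ 2 = ∑ k, (ℓ:ℝ) * lam k * (v k j * v k j) := by
        rw [← real_inner_self_eq_norm_sq, hUU]
        simp only [Finset.mul_sum]
        exact Finset.sum_congr rfl fun k _ => by ring
      have hB : ⟪U j, ∑ k, (s k * v k j) • ψ k⟫
          = ∑ k, (ℓ:ℝ) * lam k * (v k j * v k j) := by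
        rw [inner_sum]
        refine Finset.sum_congr rfl fun k _ => ?_
        rw [real_inner_smul_right, real_inner_comm, hψU]
        rw [show s k * v k j * (s k * v k j) = (s k * s k) * (v k j * v k j) by ring,
          hssq k]
      have hC : ‖∑ k, (s k * v k j) • ψ k‖ ^ 2
          = ∑ k, (ℓ:ℝ) * lam k * (v k j * v k j) := by
        rw [← real_inner_self_eq_norm_sq, sum_inner]
        refine Finset.sum_congr rfl fun k _ => ?_
        rw [real_inner_smul_left, hψorth.inner_right_fintype]
        rw [show s k * v k j * (s k * v k j) = (s k * s k) * (v k j * v k j) by ring,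
          hssq k]
      rw [hA, hB, hC]; ring
    have h0 : U j - ∑ k, (s k * v k j) • ψ k = 0 := by
      have := hn
      rwa [pow_eq_zero_iff (two_ne_zero), norm_eq_zero] at this
    exact sub_eq_zero.mp h0
  -- coefficients of φ in the POD basis
  set c : Fin l → Fin d → ℝ := fun k m => ⟪ψ k, φ m⟫ with hcdef
  have hUφ : ∀ j m, ⟪U j, φ m⟫ = ∑ k, s k * v k j * c k m := by
    intro j m
    conv_lhs => rw [hUdec j]
    rw [sum_inner]
    exact Finset.sum_congr rfl fun k _ => by rw [real_inner_smul_left]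
  -- energy identity per mode
  have hEnergy : ∀ m, ∑ j, ⟪U j, φ m⟫ * ⟪U j, φ m⟫
      = (ℓ:ℝ) * ∑ k, lam k * (c k m * c k m) := by
    intro m
    have expand : ∀ j, ⟪U j, φ m⟫ * ⟪U j, φ m⟫
        = ∑ k, ∑ k', (s k * c k m) * (s k' * c k' m) * (v k j * v k' j) := by
      intro j
      rw [hUφ, Finset.sum_mul_sum]
      exact Finset.sum_congr rfl fun k _ => Finset.sum_congr rfl fun k' _ => by ring
    rw [Finset.sum_congr rfl fun j _ => expand j, Finset.sum_comm]
    have step1 : ∀ k : Fin l, ∑ j, ∑ k',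
        (s k * c k m) * (s k' * c k' m) * (v k j * v k' j)
        = ∑ k', (s k * c k m) * (s k' * c k' m) * (if k = k' then (1:ℝ) else 0) := by
      intro k
      rw [Finset.sum_comm]
      refine Finset.sum_congr rfl fun k' _ => ?_
      rw [← hvorth k k', Finset.mul_sum]
    rw [Finset.sum_congr rfl fun k _ => step1 k]
    simp only [mul_ite, mul_one, mul_zero, Finset.sum_ite_eq, Finset.mem_univ, if_true]
    rw [Finset.mul_sum]
    refine Finset.sum_congr rfl fun k _ => ?_
    rw [show (s k * c k m) * (s k * c k m) = (s k * s k) * (c k m * c k m) by ring,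
      hssq k]
    ring
  -- Bessel bounds
  have hb0 : ∀ k, 0 ≤ ∑ m, c k m * c k m :=
    fun k => Finset.sum_nonneg fun m _ => mul_self_nonneg _
  have hb1 : ∀ k, ∑ m, c k m * c k m ≤ 1 := by
    intro k
    have h := hφ.sum_inner_products_le (𝕜 := ℝ) (ψ k) (s := Finset.univ)
    have hnorm : ‖ψ k‖ ^ 2 = 1 := by
      rw [← real_inner_self_eq_norm_sq, hψψ, if_pos rfl]
    rw [hnorm] at h
    calc ∑ m, c k m * c k m = ∑ m, ‖⟪φ m, ψ k⟫‖ ^ 2 := by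
          refine Finset.sum_congr rfl fun m _ => ?_
          rw [real_inner_comm, Real.norm_eq_abs, sq_abs, sq]
      _ ≤ 1 := h
  have hb2 : ∑ k, ∑ m, c k m * c k m ≤ (d:ℝ) := by
    rw [Finset.sum_comm]
    calc ∑ m, ∑ k, c k m * c k m
        ≤ ∑ m : Fin d, (1:ℝ) := by
          refine Finset.sum_le_sum fun m _ => ?_
          have h := hψorth.sum_inner_products_le (𝕜 := ℝ) (φ m) (s := Finset.univ)
          have hnorm : ‖φ m‖ ^ 2 = 1 := by rw [hφ.1 m]; norm_num
          rw [hnorm] at h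
          calc ∑ k, c k m * c k m = ∑ k, ‖⟪ψ k, φ m⟫‖ ^ 2 := by
                refine Finset.sum_congr rfl fun k _ => ?_
                rw [Real.norm_eq_abs, sq_abs, sq]
            _ ≤ 1 := h
      _ = (d:ℝ) := by simp
  -- error formula
  have hErr : ∀ i, ‖U i - ∑ j, ⟪U i, φ j⟫ • φ j‖ ^ 2
      = ‖U i‖ ^ 2 - ∑ m, ⟪U i, φ m⟫ * ⟪U i, φ m⟫ := by
    intro i
    rw [norm_sub_sq_real]
    have hB : ⟪U i, ∑ j, ⟪U i, φ j⟫ • φ j⟫ = ∑ m, ⟪U i, φ m⟫ * ⟪U i, φ m⟫ := by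
      rw [inner_sum]
      refine Finset.sum_congr rfl fun m _ => ?_
      rw [real_inner_smul_right, real_inner_comm]
    have hC : ‖∑ j, ⟪U i, φ j⟫ • φ j‖ ^ 2 = ∑ m, ⟪U i, φ m⟫ * ⟪U i, φ m⟫ := by
      rw [← real_inner_self_eq_norm_sq, sum_inner]
      refine Finset.sum_congr rfl fun m _ => ?_
      rw [real_inner_smul_left, hφ.inner_right_fintype]
    rw [hB, hC]; ring
  have htrace : ∑ i, ‖U i‖ ^ 2 = (ℓ:ℝ) * ∑ k, lam k := by
    have h1 : ∀ i, ‖U i‖ ^ 2 = (ℓ:ℝ) * ∑ k, lam k * v k i * v k i := by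
      intro i; rw [← real_inner_self_eq_norm_sq, hUU]
    rw [Finset.sum_congr rfl fun i _ => h1 i, ← Finset.mul_sum, Finset.sum_comm]
    congr 1
    refine Finset.sum_congr rfl fun k _ => ?_
    have : ∑ i, lam k * v k i * v k i = lam k * ∑ i, v k i * v k i := by
      rw [Finset.mul_sum]
      exact Finset.sum_congr rfl fun i _ => by ring
    rw [this, hvorth, if_pos rfl, mul_one]
  -- total error value
  have hTotal : ∑ i, ‖U i - ∑ j, ⟪U i, φ j⟫ • φ j‖ ^ 2
      = (ℓ:ℝ) * (∑ k, lam k - ∑ k, lam k * ∑ m, c k m * c k m) := by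
    rw [Finset.sum_congr rfl fun i _ => hErr i, Finset.sum_sub_distrib, htrace]
    have h2 : ∑ i, ∑ m, ⟪U i, φ m⟫ * ⟪U i, φ m⟫
        = (ℓ:ℝ) * ∑ k, lam k * ∑ m, c k m * c k m := by
      rw [Finset.sum_comm, Finset.sum_congr rfl fun m _ => hEnergy m, ← Finset.mul_sum,
        Finset.sum_comm]
      congr 1
      refine Finset.sum_congr rfl fun k _ => ?_
      rw [Finset.mul_sum]
    rw [h2]; ring
  -- the combinatorial bound : ∑ lam k * b k ≤ ∑_{k < d} lam k
  set A : Finset (Fin l) := Finset.univ.filter (fun k : Fin l => (k:ℕ) < d) with hAdef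
  have hcard : A.card = d := by
    have : A = Finset.map (Fin.castLEEmb hdl) Finset.univ := by
      ext k
      simp only [hAdef, Finset.mem_filter, Finset.mem_univ, true_and, Finset.mem_map]
      constructor
      · intro hk
        exact ⟨⟨(k:ℕ), hk⟩, by ext; simp [Fin.castLEEmb]⟩
      · rintro ⟨a, rfl⟩
        simpa [Fin.castLEEmb] using a.isLt
    rw [this, Finset.card_map, Finset.card_univ, Fintype.card_fin]
  set μ : ℝ := if h : d < l then lam ⟨d, h⟩ else 0 with hμdef
  have hμ0 : 0 ≤ μ := by
    rw [hμdef]; split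
    · exact le_of_lt (hpos _)
    · exact le_refl 0
  have hμle : ∀ k : Fin l, (k:ℕ) < d → μ ≤ lam k := by
    intro k hk
    rw [hμdef]; split
    · next h => exact hmono k ⟨d, h⟩ (by exact le_of_lt hk)
    · exact le_of_lt (hpos k)
  have hleμ : ∀ k : Fin l, d ≤ (k:ℕ) → lam k ≤ μ := by
    intro k hk
    have hdl' : d < l := lt_of_le_of_lt hk k.isLt
    rw [hμdef, dif_pos hdl']
    exact hmono ⟨d, hdl'⟩ k (by exact hk)
  have hmain : ∑ k, lam k * ∑ m, c k m * c k m ≤ ∑ k ∈ A, lam k := by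
    have h1 : ∀ k : Fin l, lam k * ∑ m, c k m * c k m
        ≤ (if (k:ℕ) < d then lam k - μ else 0) + μ * ∑ m, c k m * c k m := by
      intro k
      by_cases hk : (k:ℕ) < d
      · rw [if_pos hk]
        nlinarith [hμle k hk, hb0 k, hb1 k]
      · rw [if_neg hk]
        nlinarith [hleμ k (not_lt.mp hk), hb0 k]
    calc ∑ k, lam k * ∑ m, c k m * c k m
        ≤ ∑ k : Fin l, ((if (k:ℕ) < d then lam k - μ else 0) + μ * ∑ m, c k m * c k m) :=
          Finset.sum_le_sum fun k _ => h1 k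
      _ = (∑ k ∈ A, (lam k - μ)) + μ * ∑ k, ∑ m, c k m * c k m := by
          rw [Finset.sum_add_distrib, Finset.sum_filter, ← Finset.mul_sum]
      _ = ((∑ k ∈ A, lam k) - (d:ℝ) * μ) + μ * ∑ k, ∑ m, c k m * c k m := by
          rw [Finset.sum_sub_distrib, Finset.sum_const, hcard, nsmul_eq_mul]
      _ ≤ ((∑ k ∈ A, lam k) - (d:ℝ) * μ) + μ * (d:ℝ) :=
          add_le_add (le_refl _) (mul_le_mul_of_nonneg_left hb2 hμ0)
      _ = ∑ k ∈ A, lam k := by ring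
  -- assemble
  have hsplit : ∑ k, lam k
      = (∑ k ∈ Finset.univ.filter (fun k : Fin l => d ≤ (k:ℕ)), lam k) + ∑ k ∈ A, lam k := by
    rw [hAdef]
    have : Finset.univ.filter (fun k : Fin l => (k:ℕ) < d)
        = Finset.univ.filter (fun k : Fin l => ¬ d ≤ (k:ℕ)) := by
      refine Finset.filter_congr fun k _ => ?_
      simp [not_le]
    rw [this]
    exact (Finset.sum_filter_add_sum_filter_not _ _ _).symm
  rw [hTotal]
  rw [show (1 / (ℓ:ℝ)) * ((ℓ:ℝ) * (∑ k, lam k - ∑ k, lam k * ∑ m, c k m * c k m))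
      = ∑ k, lam k - ∑ k, lam k * ∑ m, c k m * c k m by field_simp]
  linarith [hmain, hsplit]
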